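/- arXiv:2011.05701 — 3 statements merged into one kernel-verified Lean document; each statement's English description precedes it below -/
import Mathlib

section
/- (Error decomposition via diagonalization) Under the biorthogonality relations ∫_0^Y y^α v_i' v_j' dy = δ_{ij}, ∫_0^Y y^α v_i v_j dy = μ_i δ_{ij}, suppose U_i ∈ H¹₀(Ω) solve a_{μ_i,Ω}(U_i, V) = d_s v_i(0) ⟨f, V⟩ for all V ∈ H¹₀(Ω), and Π_i U_i are their Galerkin projections onto closed subspaces W_i ⊂ H¹₀(Ω). Set u_M := Σ_i U_i v_i and u_{h,M} := Σ_i (Π_i U_i) v_i. Then the extension-energy error satisfies a_C(u_M − u_{h,M}, u_M − u_{h,M}) = Σ_{i=1}^M ‖U_i − Π_i U_i‖²_{μ_i,Ω}, where a_C(Z,Z) = ∫_0^Y∫_Ω y^α (A∇_x Z·∇_x Z + |∂_y Z|²). -/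
open Real MeasureTheory RealInnerProductSpace

/-- Error decomposition via diagonalization (Lemma 3 of the paper): with the
biorthogonal eigenfunctions `v_i` on `(0,Y)` (weight `y^α`), solutions `U_i`
of the decoupled reaction–diffusion problems
`a_{μ_i}(U_i, W) = d_s v_i(0) ⟨f, W⟩`, and Galerkin projections `P_i = Π_i U_i`
onto closed subspaces `W_i`, the extension energy of
`u_M − u_{h,M} = ∑ (U_i − P_i) v_i` equals `∑ ‖U_i − P_i‖²_{μ_i}`.
`E` plays the role of `H¹₀(Ω)` with the `L²` inner product, `B` the form
`∫ A∇U·∇V`. -/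
theorem stmt_9 {E : Type*} [NormedAddCommGroup E] [InnerProductSpace ℝ E]
    (B : E →ₗ[ℝ] E →ₗ[ℝ] ℝ) (hBsymm : ∀ u w : E, B u w = B w u)
    (Y α : ℝ) (hY : 0 < Y) (hα : α ∈ Set.Ioo (-1:ℝ) 1)
    (M : ℕ) (v v' : Fin M → ℝ → ℝ)
    (hderiv : ∀ i, ∀ y ∈ Set.Ioc 0 Y, HasDerivAt (v i) (v' i y) y)
    (μ : Fin M → ℝ) (hμ : ∀ i, 0 < μ i)
    (hint1 : ∀ i j, IntegrableOn (fun y => y ^ α * (v' i y * v' j y)) (Set.Ioc 0 Y))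
    (hint2 : ∀ i j, IntegrableOn (fun y => y ^ α * (v i y * v j y)) (Set.Ioc 0 Y))
    (horth1 : ∀ i j,
      (∫ y in Set.Ioc 0 Y, y ^ α * (v' i y * v' j y)) = if i = j then 1 else 0)
    (horth2 : ∀ i j,
      (∫ y in Set.Ioc 0 Y, y ^ α * (v i y * v j y)) = if i = j then μ i else 0)
    (ds : ℝ) (f : E →L[ℝ] ℝ)
    (U : Fin M → E)
    (hU : ∀ i, ∀ w : E, μ i * B (U i) w + ⟪U i, w⟫ = ds * v i 0 * f w)
    (Wsp : Fin M → Submodule ℝ E) (hWcl : ∀ i, IsClosed ((Wsp i : Set E)))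
    (P : Fin M → E) (hP : ∀ i, P i ∈ Wsp i)
    (hGal : ∀ i, ∀ w ∈ Wsp i,
      μ i * B (U i - P i) w + ⟪U i - P i, w⟫ = (0:ℝ)) :
    (∫ y in Set.Ioc 0 Y, y ^ α *
        (B (∑ i, v i y • (U i - P i)) (∑ i, v i y • (U i - P i))
          + ‖∑ i, v' i y • (U i - P i)‖ ^ 2))
      = ∑ i, (μ i * B (U i - P i) (U i - P i) + ‖U i - P i‖ ^ 2) := by
  classical
  set e : Fin M → E := fun i => U i - P i with he
  have key : ∀ y : ℝ, y ^ α *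
      (B (∑ i, v i y • e i) (∑ i, v i y • e i)
        + ‖∑ i, v' i y • e i‖ ^ 2)
      = ∑ i, ∑ j, (B (e i) (e j) * (y ^ α * (v i y * v j y))
          + ⟪e i, e j⟫ * (y ^ α * (v' i y * v' j y))) := by
    intro y
    have h1 : B (∑ i, v i y • e i) (∑ i, v i y • e i)
        = ∑ i, ∑ j, (v i y * v j y) * B (e i) (e j) := by
      simp only [map_sum, LinearMap.sum_apply, _root_.map_smul, LinearMap.smul_apply,
        smul_eq_mul, Finset.mul_sum]
      rw [Finset.sum_comm]
      refine Finset.sum_congr rfl fun i _ => Finset.sum_congr rfl fun j _ => ?_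
      ring
    have h2 : ‖∑ i, v' i y • e i‖ ^ 2
        = ∑ i, ∑ j, (v' i y * v' j y) * ⟪e i, e j⟫ := by
      rw [← real_inner_self_eq_norm_sq]
      simp only [sum_inner, inner_sum, real_inner_smul_left, real_inner_smul_right,
        Finset.mul_sum]
      refine Finset.sum_congr rfl fun i _ => Finset.sum_congr rfl fun j _ => ?_
      rw [real_inner_comm (e j) (e i)]; ring
    rw [h1, h2, ← Finset.sum_add_distrib, Finset.mul_sum]
    refine Finset.sum_congr rfl fun i _ => ?_
    rw [mul_add, Finset.mul_sum, Finset.mul_sum, ← Finset.sum_add_distrib]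
    refine Finset.sum_congr rfl fun j _ => ?_
    ring
  have hintg : ∀ i j : Fin M, IntegrableOn
      (fun y => B (e i) (e j) * (y ^ α * (v i y * v j y))
        + ⟪e i, e j⟫ * (y ^ α * (v' i y * v' j y))) (Set.Ioc 0 Y) := fun i j =>
    ((hint2 i j).const_mul _).add ((hint1 i j).const_mul _)
  calc (∫ y in Set.Ioc 0 Y, y ^ α *
        (B (∑ i, v i y • e i) (∑ i, v i y • e i)
          + ‖∑ i, v' i y • e i‖ ^ 2))
      = ∫ y in Set.Ioc 0 Y, ∑ i, ∑ j,
          (B (e i) (e j) * (y ^ α * (v i y * v j y))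
            + ⟪e i, e j⟫ * (y ^ α * (v' i y * v' j y))) := by
        exact integral_congr_ae (Filter.Eventually.of_forall fun y => key y)
    _ = ∑ i, ∑ j, ∫ y in Set.Ioc 0 Y,
          (B (e i) (e j) * (y ^ α * (v i y * v j y))
            + ⟪e i, e j⟫ * (y ^ α * (v' i y * v' j y))) := by
        rw [integral_finset_sum _ (fun i _ => integrable_finset_sum _
          (fun j _ => hintg i j))]
        exact Finset.sum_congr rfl fun i _ =>
          integral_finset_sum _ (fun j _ => hintg i j)
    _ = ∑ i, ∑ j, (B (e i) (e j) * (if i = j then μ i else 0)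
          + ⟪e i, e j⟫ * (if i = j then 1 else 0)) := by
        refine Finset.sum_congr rfl fun i _ => Finset.sum_congr rfl fun j _ => ?_
        rw [integral_add ((hint2 i j).const_mul _) ((hint1 i j).const_mul _),
          integral_const_mul, integral_const_mul, horth1 i j, horth2 i j]
    _ = ∑ i, (μ i * B (e i) (e i) + ‖e i‖ ^ 2) := by
        refine Finset.sum_congr rfl fun i _ => ?_
        simp only [mul_ite, mul_zero, mul_one, Finset.sum_add_distrib,
          Finset.sum_ite_eq, Finset.mem_univ, if_true, real_inner_self_eq_norm_sq]
        ring
end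

section
/- (Scalar extension identity) For λ > 0, s ∈ (0,1), and α = 1−2s, let ψ_λ : (0,∞) → ℝ be the decaying solution of the ODE ψ'' + (α/y) ψ' − λ ψ = 0 with ψ(0) = 1 (expressible via the modified Bessel function K_s: ψ_λ(y) = (2^{1-s}/Γ(s)) (√λ y)^s K_s(√λ y)). Then −lim_{y→0⁺} y^α ψ_λ'(y) = d_s λ^s with d_s = 2^{1-2s} Γ(1-s)/Γ(s). -/
open Real Filter
open MeasureTheory Set

namespace CS14

noncomputable def G (a c t : ℝ) : ℝ := t ^ a * Real.exp (-t - c / t)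

noncomputable def K (a c : ℝ) : ℝ := ∫ t in Ioi (0:ℝ), G a c t

lemma G_nonneg (a c t : ℝ) (ht : 0 ≤ t) : 0 ≤ G a c t :=
  mul_nonneg (Real.rpow_nonneg ht a) (Real.exp_pos _).le

lemma continuousOn_G (a c : ℝ) : ContinuousOn (G a c) (Ioi (0:ℝ)) := by
  intro t ht
  have ht' : (0:ℝ) < t := ht
  have h1 : ContinuousAt (fun t : ℝ => t ^ a) t :=
    Real.continuousAt_rpow_const t a (Or.inl ht'.ne')
  have h2 : ContinuousAt (fun t : ℝ => Real.exp (-t - c / t)) t := by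
    apply Real.continuous_exp.continuousAt.comp
    exact (continuousAt_id.neg).sub (continuousAt_const.div continuousAt_id ht'.ne')
  exact (h1.mul h2).continuousWithinAt

lemma aesm_G (a c : ℝ) :
    AEStronglyMeasurable (G a c) (volume.restrict (Ioi (0:ℝ))) :=
  (continuousOn_G a c).aestronglyMeasurable measurableSet_Ioi

lemma exp_neg_div_le (c : ℝ) (hc : 0 < c) (n : ℕ) {t : ℝ} (ht : 0 < t) :
    Real.exp (-(c / t)) ≤ n.factorial * (t / c) ^ n := by
  have h1 : (c / t) ^ n / n.factorial ≤ Real.exp (c / t) :=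
    Real.pow_div_factorial_le_exp (x := c / t) (by positivity) n
  have hpos : (0:ℝ) < (c / t) ^ n / n.factorial := by positivity
  calc Real.exp (-(c / t)) = (Real.exp (c / t))⁻¹ := by rw [Real.exp_neg]
    _ ≤ ((c / t) ^ n / n.factorial)⁻¹ := by gcongr
    _ = n.factorial * (t / c) ^ n := by
        rw [inv_div, div_pow, div_pow, div_div_eq_mul_div, mul_div_assoc]

lemma G_le (a c : ℝ) (hc : 0 < c) (n : ℕ) {t : ℝ} (ht : 0 < t) :
    G a c t ≤ (n.factorial / c ^ n) * (Real.exp (-t) * t ^ (a + n)) := by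
  have hsplit : Real.exp (-t - c / t) = Real.exp (-t) * Real.exp (-(c / t)) := by
    rw [← Real.exp_add]; ring_nf
  have h2 := exp_neg_div_le c hc n ht
  have h3 : t ^ (a + (n:ℝ)) = t ^ a * t ^ n := by
    rw [Real.rpow_add ht, Real.rpow_natCast]
  rw [G, hsplit, h3]
  calc t ^ a * (Real.exp (-t) * Real.exp (-(c / t)))
      ≤ t ^ a * (Real.exp (-t) * (n.factorial * (t / c) ^ n)) := by
        have := Real.rpow_nonneg ht.le a
        have := (Real.exp_pos (-t)).le
        gcongr
    _ = (n.factorial / c ^ n) * (Real.exp (-t) * (t ^ a * t ^ n)) := by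
        rw [div_pow]; field_simp

lemma integrableOn_G (a c : ℝ) (hc : 0 < c) :
    IntegrableOn (G a c) (Ioi (0:ℝ)) := by
  obtain ⟨n, hn⟩ : ∃ n : ℕ, 0 < a + n + 1 := by
    obtain ⟨n, hn⟩ := exists_nat_gt (-(a+1))
    exact ⟨n, by linarith⟩
  have hGamma : IntegrableOn (fun t : ℝ => Real.exp (-t) * t ^ (a + n)) (Ioi (0:ℝ)) := by
    have := Real.GammaIntegral_convergent hn
    simpa using this
  apply Integrable.mono' (hGamma.const_mul (n.factorial / c ^ n)) (aesm_G a c)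
  filter_upwards [ae_restrict_mem measurableSet_Ioi] with t ht
  rw [Real.norm_eq_abs, abs_of_nonneg (G_nonneg a c t (le_of_lt ht))]
  exact G_le a c hc n ht

/-- Integrability with the `exp(-t) * t^a` dominating bound, valid for `a > -1`, `c ≥ 0`. -/
lemma integrableOn_G' (a c : ℝ) (ha : -1 < a) (hc : 0 ≤ c) :
    IntegrableOn (G a c) (Ioi (0:ℝ)) := by
  have hGamma : IntegrableOn (fun t : ℝ => Real.exp (-t) * t ^ a) (Ioi (0:ℝ)) := by
    have := Real.GammaIntegral_convergent (show 0 < a + 1 by linarith)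
    simpa using this
  apply Integrable.mono' hGamma (aesm_G a c)
  filter_upwards [ae_restrict_mem measurableSet_Ioi] with t ht
  rw [Real.norm_eq_abs, abs_of_nonneg (G_nonneg a c t (le_of_lt ht))]
  rw [G, mul_comm (Real.exp (-t))]
  gcongr
  · exact Real.rpow_nonneg (le_of_lt ht) a
  · have h1 : 0 ≤ c / t := div_nonneg hc (le_of_lt (show (0:ℝ) < t from ht))
    linarith

end CS14

namespace CS14B
open CS14

lemma G_mono_c (a : ℝ) {c c' : ℝ} (h : c' ≤ c) {t : ℝ} (ht : 0 < t) :
    G a c t ≤ G a c' t := by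
  unfold G
  apply mul_le_mul_of_nonneg_left _ (Real.rpow_nonneg ht.le a)
  apply Real.exp_le_exp.2
  have h1 : c' / t ≤ c / t := by gcongr
  linarith

lemma hasDerivAt_G_param (lam a : ℝ) {t : ℝ} (ht : 0 < t) (x : ℝ) :
    HasDerivAt (fun x : ℝ => G a (lam * x ^ 2 / 4) t)
      (-(lam * x / 2) * G (a - 1) (lam * x ^ 2 / 4) t) x := by
  have h0 : HasDerivAt (fun x : ℝ => -t - lam * x ^ 2 / 4 / t)
      (-(lam * x / 2) / t) x := by
    have h1 : HasDerivAt (fun x : ℝ => x ^ 2) (2 * x) x := by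
      simpa using hasDerivAt_pow 2 x
    have h2 : HasDerivAt (fun x : ℝ => lam * x ^ 2 / 4 / t)
        (lam * (2 * x) / 4 / t) x := ((h1.const_mul lam).div_const 4).div_const t
    have h3 := (hasDerivAt_const x (-t)).sub h2
    refine h3.congr_deriv ?_
    ring
  have h4 := h0.exp.const_mul (t ^ a)
  refine h4.congr_deriv ?_
  unfold G
  have e1 : t ^ (a - 1) = t ^ a * t⁻¹ := by
    rw [Real.rpow_sub ht, Real.rpow_one, div_eq_mul_inv]
  rw [e1]
  field_simp

lemma hasDerivAt_K (lam a : ℝ) (hlam : 0 < lam) {y : ℝ} (hy : 0 < y) :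
    HasDerivAt (fun x : ℝ => K a (lam * x ^ 2 / 4))
      (-(lam * y / 2) * K (a - 1) (lam * y ^ 2 / 4)) y := by
  have hc : 0 < lam * y ^ 2 / 4 := by positivity
  have hc' : 0 < lam * (y / 2) ^ 2 / 4 := by positivity
  have hbound : ∀ᵐ t ∂(volume.restrict (Ioi (0:ℝ))), ∀ x ∈ Metric.ball y (y / 2),
      ‖-(lam * x / 2) * G (a - 1) (lam * x ^ 2 / 4) t‖
        ≤ (lam * (3 * y / 2) / 2) * G (a - 1) (lam * (y / 2) ^ 2 / 4) t := by
    filter_upwards [ae_restrict_mem measurableSet_Ioi] with t ht x hx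
    have ht' : (0:ℝ) < t := ht
    rw [Metric.mem_ball, Real.dist_eq, abs_lt] at hx
    have hx1 : y / 2 < x := by linarith
    have hx2 : x < 3 * y / 2 := by linarith
    have hx0 : 0 < x := lt_trans (by positivity) hx1
    rw [Real.norm_eq_abs, abs_mul, abs_neg, abs_of_nonneg (G_nonneg _ _ _ ht'.le),
      abs_of_pos (show (0:ℝ) < lam * x / 2 by positivity)]
    have hsq : (y / 2) ^ 2 ≤ x ^ 2 := by nlinarith
    have hcc : lam * (y / 2) ^ 2 / 4 ≤ lam * x ^ 2 / 4 := by gcongr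
    have hmon : G (a - 1) (lam * x ^ 2 / 4) t ≤ G (a - 1) (lam * (y / 2) ^ 2 / 4) t :=
      G_mono_c _ hcc ht'
    apply mul_le_mul _ hmon (G_nonneg _ _ _ ht'.le) (by positivity)
    nlinarith
  have hdiff : ∀ᵐ t ∂(volume.restrict (Ioi (0:ℝ))), ∀ x ∈ Metric.ball y (y / 2),
      HasDerivAt (fun x : ℝ => G a (lam * x ^ 2 / 4) t)
        (-(lam * x / 2) * G (a - 1) (lam * x ^ 2 / 4) t) x := by
    filter_upwards [ae_restrict_mem measurableSet_Ioi] with t ht x _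
    exact hasDerivAt_G_param lam a ht x
  have key := hasDerivAt_integral_of_dominated_loc_of_deriv_le
    (μ := volume.restrict (Ioi (0:ℝ))) (x₀ := y) (s := Metric.ball y (y / 2))
    (F := fun x t => G a (lam * x ^ 2 / 4) t)
    (F' := fun x t => -(lam * x / 2) * G (a - 1) (lam * x ^ 2 / 4) t)
    (bound := fun t => (lam * (3 * y / 2) / 2) * G (a - 1) (lam * (y / 2) ^ 2 / 4) t)
    (Metric.ball_mem_nhds y (by positivity))
    (Eventually.of_forall fun x => aesm_G a _)
    (integrableOn_G a _ hc)
    ((aesm_G (a - 1) _).const_mul _)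
    hbound ((integrableOn_G (a - 1) _ hc').const_mul _)
    hdiff
  have heq : (∫ t in Ioi (0:ℝ), -(lam * y / 2) * G (a - 1) (lam * y ^ 2 / 4) t)
      = -(lam * y / 2) * K (a - 1) (lam * y ^ 2 / 4) :=
    MeasureTheory.integral_const_mul _ _
  have := key.2
  rw [heq] at this
  exact this

end CS14B

namespace CS14C
open CS14

lemma tendsto_G_zero (a c : ℝ) (hc : 0 < c) : Tendsto (G a c) (nhdsWithin 0 (Ioi 0)) (nhds 0) := by
  obtain ⟨n, hn⟩ : ∃ n : ℕ, 0 < a + n := by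
    obtain ⟨n, hn⟩ := exists_nat_gt (-a); exact ⟨n, by linarith⟩
  apply squeeze_zero'
  · filter_upwards [self_mem_nhdsWithin] with t ht
    exact G_nonneg a c t (le_of_lt ht)
  · filter_upwards [self_mem_nhdsWithin] with t ht
    calc G a c t ≤ (n.factorial / c ^ n) * (Real.exp (-t) * t ^ (a + n)) := G_le a c hc n ht
      _ ≤ (n.factorial / c ^ n) * t ^ (a + n) := by
          apply mul_le_mul_of_nonneg_left _ (by positivity)
          apply mul_le_of_le_one_left (Real.rpow_nonneg (le_of_lt (show (0:ℝ) < t from ht)) _)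
          exact Real.exp_le_one_iff.2 (by linarith [le_of_lt (show (0:ℝ) < t from ht)])
  · have h1 : Tendsto (fun t : ℝ => t ^ (a + n)) (nhds 0) (nhds ((0:ℝ) ^ (a + (n:ℝ)))) :=
      (Real.continuousAt_rpow_const 0 _ (Or.inr hn.le)).tendsto
    rw [Real.zero_rpow hn.ne'] at h1
    have h2 := (h1.mono_left (nhdsWithin_le_nhds (s := Ioi (0:ℝ)))).const_mul ((n.factorial : ℝ) / c ^ n)
    simpa using h2

lemma tendsto_G_atTop (a c : ℝ) (hc : 0 ≤ c) : Tendsto (G a c) atTop (nhds 0) := by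
  apply squeeze_zero'
  · filter_upwards [Ioi_mem_atTop (0:ℝ)] with t ht
    exact G_nonneg a c t (le_of_lt ht)
  · filter_upwards [Ioi_mem_atTop (0:ℝ)] with t ht
    show G a c t ≤ t ^ a * Real.exp (-1 * t)
    rw [G]
    gcongr
    · exact Real.rpow_nonneg (le_of_lt ht) a
    · have : 0 ≤ c / t := div_nonneg hc (le_of_lt ht)
      linarith
  · exact tendsto_rpow_mul_exp_neg_mul_atTop_nhds_zero a 1 one_pos

lemma hasDerivAt_G_t (a c : ℝ) {t : ℝ} (ht : 0 < t) :
    HasDerivAt (G a c) (a * G (a - 1) c t - G a c t + c * G (a - 2) c t) t := by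
  have h1 : HasDerivAt (fun t : ℝ => t ^ a) (a * t ^ (a - 1)) t :=
    Real.hasDerivAt_rpow_const (Or.inl ht.ne')
  have hinv : HasDerivAt (fun x : ℝ => c / x) (-(c / t ^ 2)) t := by
    have h := (hasDerivAt_inv ht.ne').const_mul c
    simp only [div_eq_mul_inv]
    refine h.congr_deriv ?_
    field_simp
  have h2 : HasDerivAt (fun x : ℝ => -x - c / x) (-1 - -(c / t ^ 2)) t :=
    ((hasDerivAt_id t).neg).sub hinv
  have h3 := h1.mul h2.exp
  refine h3.congr_deriv ?_
  unfold G
  have e1 : t ^ (a - 1) = t ^ a * t⁻¹ := by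
    rw [Real.rpow_sub ht, Real.rpow_one, div_eq_mul_inv]
  have e2 : t ^ (a - 2) = t ^ a * t⁻¹ * t⁻¹ := by
    have : a - 2 = a - 1 - 1 := by ring
    rw [this, Real.rpow_sub ht, Real.rpow_one, e1]
    ring
  rw [e1, e2]
  field_simp
  ring

lemma K_rec (a c : ℝ) (hc : 0 < c) :
    K a c = a * K (a - 1) c + c * K (a - 2) c := by
  have hint1 := integrableOn_G (a - 1) c hc
  have hint2 := integrableOn_G (a - 2) c hc
  have hint0 := integrableOn_G a c hc
  have hu' : IntegrableOn
      (fun t => a * G (a - 1) c t - G a c t + c * G (a - 2) c t) (Ioi (0:ℝ)) :=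
    ((hint1.const_mul a).sub hint0).add (hint2.const_mul c)
  have key := MeasureTheory.integral_Ioi_deriv_mul_eq_sub
    (u := G a c) (v := fun _ => (1:ℝ))
    (u' := fun t => a * G (a - 1) c t - G a c t + c * G (a - 2) c t)
    (v' := fun _ => 0)
    (fun t ht => hasDerivAt_G_t a c ht)
    (fun t _ => hasDerivAt_const t 1)
    (by simpa [Pi.add_def, Pi.mul_def] using hu')
    (by simpa [Pi.mul_def] using tendsto_G_zero a c hc)
    (by simpa [Pi.mul_def] using tendsto_G_atTop a c hc.le)
  simp only [mul_one, mul_zero, add_zero, sub_zero] at key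
  have hf : Integrable (fun t => a * G (a - 1) c t - G a c t)
      (volume.restrict (Ioi (0:ℝ))) := by exact (hint1.const_mul a).sub hint0
  have hg : Integrable (fun t => c * G (a - 2) c t)
      (volume.restrict (Ioi (0:ℝ))) := by exact hint2.const_mul c
  rw [MeasureTheory.integral_add hf hg,
    MeasureTheory.integral_sub (by exact hint1.const_mul a) hint0,
    MeasureTheory.integral_const_mul, MeasureTheory.integral_const_mul] at key
  rw [K, K, K]
  linarith [key]

end CS14C

namespace CS14D
open CS14

lemma G_le' (a c : ℝ) (hc : 0 ≤ c) {t : ℝ} (ht : 0 < t) :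
    G a c t ≤ Real.exp (-t) * t ^ a := by
  rw [G, mul_comm (Real.exp (-t))]
  apply mul_le_mul_of_nonneg_left _ (Real.rpow_nonneg ht.le a)
  apply Real.exp_le_exp.2
  have h1 : 0 ≤ c / t := div_nonneg hc ht.le
  linarith

lemma tendsto_K_zero (lam a : ℝ) (hlam : 0 < lam) (ha : -1 < a) :
    Tendsto (fun y : ℝ => K a (lam * y ^ 2 / 4)) (nhdsWithin 0 (Ioi 0))
      (nhds (Real.Gamma (a + 1))) := by
  have hG : Real.Gamma (a + 1) = ∫ t in Ioi (0:ℝ), G a 0 t := by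
    rw [Real.Gamma_eq_integral (by linarith : (0:ℝ) < a + 1)]
    apply MeasureTheory.setIntegral_congr_fun measurableSet_Ioi
    intro t _
    show Real.exp (-t) * t ^ (a + 1 - 1) = t ^ a * Real.exp (-t - 0 / t)
    rw [zero_div, sub_zero, add_sub_cancel_right, mul_comm]
  rw [hG]
  simp only [K]
  apply MeasureTheory.tendsto_integral_filter_of_dominated_convergence
    (bound := fun t : ℝ => Real.exp (-t) * t ^ a)
  · exact Eventually.of_forall fun y => aesm_G a _
  · apply Eventually.of_forall
    intro y
    filter_upwards [ae_restrict_mem measurableSet_Ioi] with t ht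
    rw [Real.norm_eq_abs, abs_of_nonneg (G_nonneg _ _ _ (le_of_lt ht))]
    exact G_le' a _ (by positivity) ht
  · have := Real.GammaIntegral_convergent (show (0:ℝ) < a + 1 by linarith)
    exact (by simpa using this : IntegrableOn (fun t : ℝ => Real.exp (-t) * t ^ a) (Ioi 0))
  · filter_upwards [ae_restrict_mem measurableSet_Ioi] with t ht
    have hcont : Continuous fun y : ℝ => G a (lam * y ^ 2 / 4) t := by
      unfold G; fun_prop
    have h0 := (hcont.tendsto 0).mono_left
      (nhdsWithin_le_nhds (s := Ioi (0:ℝ)))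
    simpa using h0

lemma tendsto_K_atTop (lam a : ℝ) (hlam : 0 < lam) (ha : -1 < a) :
    Tendsto (fun y : ℝ => K a (lam * y ^ 2 / 4)) atTop (nhds 0) := by
  have h0 : (0:ℝ) = ∫ t in Ioi (0:ℝ), (0:ℝ) := by simp
  rw [h0]
  simp only [K]
  apply MeasureTheory.tendsto_integral_filter_of_dominated_convergence
    (bound := fun t : ℝ => Real.exp (-t) * t ^ a)
  · exact Eventually.of_forall fun y => aesm_G a _
  · apply Eventually.of_forall
    intro y
    filter_upwards [ae_restrict_mem measurableSet_Ioi] with t ht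
    rw [Real.norm_eq_abs, abs_of_nonneg (G_nonneg _ _ _ (le_of_lt ht))]
    exact G_le' a _ (by positivity) ht
  · have := Real.GammaIntegral_convergent (show (0:ℝ) < a + 1 by linarith)
    exact (by simpa using this : IntegrableOn (fun t : ℝ => Real.exp (-t) * t ^ a) (Ioi 0))
  · filter_upwards [ae_restrict_mem measurableSet_Ioi] with t ht
    have ht' : (0:ℝ) < t := ht
    have h1 : Tendsto (fun y : ℝ => y ^ 2) atTop atTop :=
      tendsto_pow_atTop two_ne_zero
    have h2 : Tendsto (fun y : ℝ => lam * y ^ 2) atTop atTop :=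
      h1.const_mul_atTop hlam
    have h3 : Tendsto (fun y : ℝ => lam * y ^ 2 / 4) atTop atTop :=
      h2.atTop_div_const (by norm_num)
    have h4 : Tendsto (fun y : ℝ => lam * y ^ 2 / 4 / t) atTop atTop :=
      h3.atTop_div_const ht'
    have h5 : Tendsto (fun y : ℝ => -t - lam * y ^ 2 / 4 / t) atTop atBot := by
      have h6 := tendsto_atBot_add_const_left atTop (-t)
        (tendsto_neg_atTop_atBot.comp h4)
      simpa [Function.comp, sub_eq_add_neg] using h6
    have h7 : Tendsto (fun y : ℝ => Real.exp (-t - lam * y ^ 2 / 4 / t)) atTop (nhds 0) :=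
      Real.tendsto_exp_atBot.comp h5
    have h8 := h7.const_mul (t ^ a)
    simpa [G] using h8

lemma K_inv (a c : ℝ) (hc : 0 < c) : K a c = c ^ (a + 1) * K (-a - 2) c := by
  have h1 := MeasureTheory.integral_comp_rpow_Ioi (g := G a c) (p := (-1:ℝ)) (by norm_num)
  have e1 : ∀ x ∈ Ioi (0:ℝ), (|(-1:ℝ)| * x ^ ((-1:ℝ) - 1)) • G a c (x ^ (-1:ℝ))
      = x ^ (-a - 2) * Real.exp (-x⁻¹ - c * x) := by
    intro x hx
    have hx' : (0:ℝ) < x := hx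
    rw [Real.rpow_neg_one, smul_eq_mul]
    unfold G
    rw [Real.inv_rpow hx'.le, ← Real.rpow_neg hx'.le, div_eq_mul_inv, inv_inv]
    have e2 : x ^ ((-1:ℝ) - 1) * x ^ (-a) = x ^ (-a - 2) := by
      rw [← Real.rpow_add hx']; ring_nf
    have : |(-1:ℝ)| = 1 := by norm_num
    rw [this, one_mul]
    calc x ^ ((-1:ℝ) - 1) * (x ^ (-a) * Real.exp (-x⁻¹ - c * x))
        = (x ^ ((-1:ℝ) - 1) * x ^ (-a)) * Real.exp (-x⁻¹ - c * x) := by ring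
      _ = x ^ (-a - 2) * Real.exp (-x⁻¹ - c * x) := by rw [e2]
  have h1' : (∫ x in Ioi (0:ℝ), x ^ (-a - 2) * Real.exp (-x⁻¹ - c * x)) = K a c := by
    rw [show K a c = ∫ t in Ioi (0:ℝ), G a c t from rfl, ← h1]
    exact (MeasureTheory.setIntegral_congr_fun measurableSet_Ioi e1).symm
  have h2 := MeasureTheory.integral_comp_mul_left_Ioi (g := G (-a - 2) c) 0 hc
  have e3 : ∀ x ∈ Ioi (0:ℝ), G (-a - 2) c (c * x)
      = c ^ (-a - 2) * (x ^ (-a - 2) * Real.exp (-x⁻¹ - c * x)) := by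
    intro x hx
    have hx' : (0:ℝ) < x := hx
    unfold G
    rw [Real.mul_rpow hc.le hx'.le]
    have e4 : c / (c * x) = x⁻¹ := by
      rw [div_mul_eq_div_div, div_self hc.ne', one_div]
    rw [e4]
    have e5 : -(c * x) - x⁻¹ = -x⁻¹ - c * x := by ring
    rw [e5]
    ring
  have h2l : (∫ x in Ioi (0:ℝ), G (-a - 2) c (c * x))
      = c ^ (-a - 2) * ∫ x in Ioi (0:ℝ), x ^ (-a - 2) * Real.exp (-x⁻¹ - c * x) := by
    rw [MeasureTheory.setIntegral_congr_fun measurableSet_Ioi e3,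
      MeasureTheory.integral_const_mul]
  have h2r : (c⁻¹ • ∫ x in Ioi (c * 0), G (-a - 2) c x) = c⁻¹ * K (-a - 2) c := by
    rw [mul_zero, smul_eq_mul]; rfl
  rw [h2l, h2r, h1'] at h2
  -- h2 : c ^ (-a - 2) * K a c = c⁻¹ * K (-a - 2) c
  have hcol : c⁻¹ = c ^ (a + 1) * c ^ (-a - 2) := by
    rw [← Real.rpow_add hc]
    have : a + 1 + (-a - 2) = -1 := by ring
    rw [this, Real.rpow_neg_one]
  rw [hcol] at h2
  have hne : c ^ ((-a) - 2) ≠ 0 := (Real.rpow_pos_of_pos hc _).ne'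
  have h3 : c ^ (-a - 2) * K a c = c ^ (-a - 2) * (c ^ (a + 1) * K (-a - 2) c) := by
    rw [h2]; ring
  exact mul_left_cancel₀ hne h3

end CS14D

namespace CS14E
open CS14

lemma max_principle (α lam : ℝ) (hlam : 0 < lam) (w w' w'' : ℝ → ℝ)
    (hd1 : ∀ y, 0 < y → HasDerivAt w (w' y) y)
    (hd2 : ∀ y, 0 < y → HasDerivAt w' (w'' y) y)
    (hode : ∀ y, 0 < y → w'' y + (α / y) * w' y - lam * w y = 0)
    (h0 : Tendsto w (nhdsWithin 0 (Ioi 0)) (nhds 0))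
    (hT : Tendsto w atTop (nhds 0)) :
    ∀ y, 0 < y → w y ≤ 0 := by
  by_contra hcon
  push_neg at hcon
  obtain ⟨y₀, hy₀, hm⟩ := hcon
  set m := w y₀ with hmdef
  have hm2 : 0 < m / 2 := by linarith
  -- small neighborhood of 0
  have h0' : ∀ᶠ y in nhdsWithin 0 (Ioi 0), w y < m / 2 :=
    h0.eventually (Filter.Tendsto.eventually_lt_const hm2 tendsto_id)
  rw [eventually_nhdsWithin_iff] at h0'
  obtain ⟨ε, hε, hball⟩ := Metric.eventually_nhds_iff.1 h0'
  set a : ℝ := min (ε / 2) (y₀ / 2) with ha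
  have ha0 : 0 < a := by positivity
  have haε : ∀ y : ℝ, 0 < y → y ≤ a → w y < m / 2 := by
    intro y hy hya
    apply hball _ hy
    rw [Real.dist_eq, sub_zero, abs_of_pos hy]
    calc y ≤ a := hya
      _ ≤ ε / 2 := min_le_left _ _
      _ < ε := by linarith
  have hay₀ : a < y₀ := lt_of_le_of_lt (min_le_right _ _) (by linarith)
  -- large values
  obtain ⟨b₀, hb₀⟩ := (hT.eventually (Filter.Tendsto.eventually_lt_const hm2 tendsto_id)).exists_forall_of_atTop
  set b : ℝ := max b₀ (y₀ + 1) with hb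
  have hby₀ : y₀ < b := lt_of_lt_of_le (by linarith) (le_max_right _ _)
  have hbig : ∀ y : ℝ, b ≤ y → w y < m / 2 := fun y hy =>
    hb₀ y (le_trans (le_max_left _ _) hy)
  -- maximum on [a, b]
  have hab : a ≤ b := by linarith
  have hcontOn : ContinuousOn w (Icc a b) := by
    intro x hx
    have hx0 : 0 < x := lt_of_lt_of_le ha0 hx.1
    exact (hd1 x hx0).continuousAt.continuousWithinAt
  obtain ⟨c, hcmem, hcmax⟩ := (isCompact_Icc).exists_isMaxOn
    (nonempty_Icc.2 hab) hcontOn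
  have hc0 : 0 < c := lt_of_lt_of_le ha0 hcmem.1
  have hwcm : m ≤ w c := hcmax (mem_Icc.2 ⟨hay₀.le, hby₀.le⟩)
  -- global max over (0, ∞)
  have hglob : IsMaxOn w (Ioi 0) c := by
    intro y hy
    have hy' : (0:ℝ) < y := hy
    rcases le_or_gt y a with h | h
    · exact le_trans (haε y hy' h).le (by linarith)
    rcases le_or_gt b y with h' | h'
    · exact le_trans (hbig y h').le (by linarith)
    · exact hcmax (mem_Icc.2 ⟨h.le, h'.le⟩)
  have hloc : IsLocalMax w c := hglob.isLocalMax (Ioi_mem_nhds hc0)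
  have hw'c : w' c = 0 := hloc.hasDerivAt_eq_zero (hd1 c hc0)
  have hw''c : w'' c = lam * w c := by
    have := hode c hc0
    rw [hw'c] at this
    linarith
  have hw''pos : 0 < w'' c := by
    rw [hw''c]
    have : 0 < w c := by linarith
    positivity
  -- slope of w' is eventually positive to the right of c
  have hslope : Tendsto (slope w' c) (nhdsWithin c {c}ᶜ) (nhds (w'' c)) :=
    hasDerivAt_iff_tendsto_slope.1 (hd2 c hc0)
  have hsl' : ∀ᶠ y in nhdsWithin c (Ioi c), 0 < slope w' c y := by
    have h1 : ∀ᶠ y in nhdsWithin c {c}ᶜ, 0 < slope w' c y :=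
      hslope.eventually (eventually_gt_nhds hw''pos)
    exact h1.filter_mono (nhdsWithin_mono c fun y hy => ne_of_gt hy)
  obtain ⟨u, hu, husub⟩ := mem_nhdsGT_iff_exists_Ioo_subset.1 hsl'
  have hu' : c < u := hu
  set d : ℝ := (c + u) / 2 with hd
  have hcd : c < d := by simp only [hd]; linarith
  have hdu : d < u := by simp only [hd]; linarith
  have hw'pos : ∀ x ∈ Ioo c d, 0 < w' x := by
    intro x hx
    have hxu : x ∈ Ioo c u := ⟨hx.1, lt_trans hx.2 hdu⟩
    have hs := husub hxu
    have : 0 < slope w' c x := hs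
    rw [slope, hw'c, vsub_eq_sub, sub_zero, smul_eq_mul] at this
    have hxc : 0 < x - c := by linarith [hx.1]
    have h2 := mul_pos this hxc
    have h3 : (x - c)⁻¹ * w' x * (x - c) = w' x := by field_simp
    nlinarith [h2, h3]
  have hmono : StrictMonoOn w (Icc c d) := by
    apply strictMonoOn_of_deriv_pos (convex_Icc c d)
    · intro x hx
      have hx0 : 0 < x := lt_of_lt_of_le hc0 hx.1
      exact (hd1 x hx0).continuousAt.continuousWithinAt
    · intro x hx
      rw [interior_Icc] at hx
      have hx0 : 0 < x := lt_trans hc0 hx.1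
      rw [(hd1 x hx0).deriv]
      exact hw'pos x hx
  have hlt : w c < w d :=
    hmono (left_mem_Icc.2 hcd.le) (right_mem_Icc.2 hcd.le) hcd
  have : w d ≤ w c := hglob (show d ∈ Ioi 0 by exact lt_trans hc0 hcd)
  linarith

end CS14E

namespace CS14F
open CS14 CS14B CS14C CS14D

noncomputable def P (s lam y : ℝ) : ℝ :=
  (1 / Real.Gamma s) * K (s - 1) (lam * y ^ 2 / 4)

noncomputable def P1 (s lam y : ℝ) : ℝ :=
  -(lam * y / (2 * Real.Gamma s)) * K (s - 2) (lam * y ^ 2 / 4)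

noncomputable def P2 (s lam y : ℝ) : ℝ :=
  (1 / Real.Gamma s) *
    (lam ^ 2 * y ^ 2 / 4 * K (s - 3) (lam * y ^ 2 / 4)
      - lam / 2 * K (s - 2) (lam * y ^ 2 / 4))

lemma hasDerivAt_P (s lam : ℝ) (hlam : 0 < lam) {y : ℝ} (hy : 0 < y) :
    HasDerivAt (P s lam) (P1 s lam y) y := by
  have h := (hasDerivAt_K lam (s - 1) hlam hy).const_mul (1 / Real.Gamma s)
  have e1 : s - 1 - 1 = s - 2 := by ring
  rw [e1] at h
  refine h.congr_deriv ?_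
  unfold P1
  ring

lemma hasDerivAt_P1 (s lam : ℝ) (hlam : 0 < lam) {y : ℝ} (hy : 0 < y) :
    HasDerivAt (P1 s lam) (P2 s lam y) y := by
  have hfun : P1 s lam = fun y : ℝ =>
      -(lam / (2 * Real.Gamma s)) * (y * K (s - 2) (lam * y ^ 2 / 4)) := by
    funext z; unfold P1; ring
  have h1 := (hasDerivAt_id y).mul (hasDerivAt_K lam (s - 2) hlam hy)
  have e1 : s - 2 - 1 = s - 3 := by ring
  rw [e1] at h1
  have h2 := h1.const_mul (-(lam / (2 * Real.Gamma s)))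
  rw [hfun]
  refine h2.congr_deriv ?_
  unfold P2
  simp only [id_eq]
  field_simp
  ring

lemma P_ode (s lam : ℝ) (hlam : 0 < lam) {y : ℝ} (hy : 0 < y) :
    P2 s lam y + ((1 - 2 * s) / y) * P1 s lam y - lam * P s lam y = 0 := by
  have hc : 0 < lam * y ^ 2 / 4 := by positivity
  have hrec := K_rec (s - 1) (lam * y ^ 2 / 4) hc
  have e1 : s - 1 - 1 = s - 2 := by ring
  have e2 : s - 1 - 2 = s - 3 := by ring
  rw [e1, e2] at hrec
  have hy' : y ≠ 0 := hy.ne'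
  have key : (1 - 2 * s) / y * (lam * y / (2 * Real.Gamma s))
      = (1 - 2 * s) * lam / (2 * Real.Gamma s) := by
    rw [div_mul_div_comm,
      show (1 - 2 * s) * (lam * y) = y * ((1 - 2 * s) * lam) by ring,
      show y * (2 * Real.Gamma s) = y * (2 * Real.Gamma s) from rfl,
      mul_div_mul_left _ _ hy']
  have emid : ((1 - 2 * s) / y) * P1 s lam y
      = -((1 - 2 * s) * lam / (2 * Real.Gamma s)) * K (s - 2) (lam * y ^ 2 / 4) := by
    unfold P1
    rw [show (1 - 2 * s) / y * (-(lam * y / (2 * Real.Gamma s)) * K (s - 2) (lam * y ^ 2 / 4))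
      = -((1 - 2 * s) / y * (lam * y / (2 * Real.Gamma s))) * K (s - 2) (lam * y ^ 2 / 4) by ring,
      key]
  rw [emid]
  unfold P P2
  rw [hrec]
  ring

lemma tendsto_P_zero (s lam : ℝ) (hs : 0 < s) (hlam : 0 < lam) :
    Tendsto (P s lam) (nhdsWithin 0 (Ioi 0)) (nhds 1) := by
  have h := (tendsto_K_zero lam (s - 1) hlam (by linarith)).const_mul
    (1 / Real.Gamma s)
  have e1 : s - 1 + 1 = s := by ring
  rw [e1] at h
  have hΓ : Real.Gamma s ≠ 0 := (Real.Gamma_pos_of_pos hs).ne'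
  have e2 : 1 / Real.Gamma s * Real.Gamma s = 1 := by field_simp
  rw [e2] at h
  exact h

lemma tendsto_P_atTop (s lam : ℝ) (hs : 0 < s) (hlam : 0 < lam) :
    Tendsto (P s lam) atTop (nhds 0) := by
  have h := (tendsto_K_atTop lam (s - 1) hlam (by linarith)).const_mul
    (1 / Real.Gamma s)
  have e : (1:ℝ) / Real.Gamma s * 0 = 0 := by ring
  rw [e] at h
  exact h

end CS14F


open CS14 CS14D CS14E CS14F

/-- Scalar (fiberwise) Caffarelli–Silvestre extension identity: if `ψ` is the
decaying solution of `ψ'' + (α/y)ψ' − λψ = 0` on `(0,∞)` with `ψ(0⁺) = 1`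
(where `α = 1−2s`), then `−lim_{y→0⁺} y^α ψ'(y) = d_s λ^s` with
`d_s = 2^{1-2s}Γ(1-s)/Γ(s)`. -/
theorem stmt_14 (s lam : ℝ) (hs : s ∈ Set.Ioo (0:ℝ) 1) (hlam : 0 < lam)
    (α : ℝ) (hα : α = 1 - 2 * s)
    (ψ ψ' ψ'' : ℝ → ℝ)
    (hd1 : ∀ y, 0 < y → HasDerivAt ψ (ψ' y) y)
    (hd2 : ∀ y, 0 < y → HasDerivAt ψ' (ψ'' y) y)
    (hode : ∀ y, 0 < y → ψ'' y + (α / y) * ψ' y - lam * ψ y = 0)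
    (hbc : Tendsto ψ (nhdsWithin 0 (Set.Ioi 0)) (nhds 1))
    (hdecay : Tendsto ψ atTop (nhds 0)) :
    Tendsto (fun y => -(y ^ α * ψ' y)) (nhdsWithin 0 (Set.Ioi 0))
      (nhds (((2:ℝ) ^ (1 - 2 * s) * Real.Gamma (1 - s) / Real.Gamma s)
        * lam ^ s)) := by
  obtain ⟨hs0, hs1⟩ := hs
  have hΓ : 0 < Real.Gamma s := Real.Gamma_pos_of_pos hs0
  have hP1 : ∀ y : ℝ, 0 < y → HasDerivAt (P s lam) (P1 s lam y) y :=
    fun y hy => hasDerivAt_P s lam hlam hy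
  have hP2 : ∀ y : ℝ, 0 < y → HasDerivAt (P1 s lam) (P2 s lam y) y :=
    fun y hy => hasDerivAt_P1 s lam hlam hy
  have hPode : ∀ y : ℝ, 0 < y →
      P2 s lam y + (α / y) * P1 s lam y - lam * P s lam y = 0 := by
    intro y hy; rw [hα]; exact P_ode s lam hlam hy
  have hPz := tendsto_P_zero s lam hs0 hlam
  have hPT := tendsto_P_atTop s lam hs0 hlam
  -- uniqueness:  ψ = P on (0, ∞)
  have hle := max_principle α lam hlam (fun y => ψ y - P s lam y)
    (fun y => ψ' y - P1 s lam y) (fun y => ψ'' y - P2 s lam y)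
    (fun y hy => (hd1 y hy).sub (hP1 y hy))
    (fun y hy => (hd2 y hy).sub (hP2 y hy))
    (fun y hy => by
      have h1 := hode y hy
      have h2 := hPode y hy
      ring_nf
      ring_nf at h1 h2
      linarith)
    (by simpa using hbc.sub hPz)
    (by simpa using hdecay.sub hPT)
  have hge := max_principle α lam hlam (fun y => P s lam y - ψ y)
    (fun y => P1 s lam y - ψ' y) (fun y => P2 s lam y - ψ'' y)
    (fun y hy => (hP1 y hy).sub (hd1 y hy))
    (fun y hy => (hP2 y hy).sub (hd2 y hy))
    (fun y hy => by
      have h1 := hode y hy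
      have h2 := hPode y hy
      ring_nf
      ring_nf at h1 h2
      linarith)
    (by simpa using hPz.sub hbc)
    (by simpa using hPT.sub hdecay)
  have heq : ∀ y : ℝ, 0 < y → ψ y = P s lam y := by
    intro y hy
    have := hle y hy
    have := hge y hy
    linarith
  have heq' : ∀ y : ℝ, 0 < y → ψ' y = P1 s lam y := by
    intro y hy
    have hev : ψ =ᶠ[nhds y] P s lam := by
      filter_upwards [Ioi_mem_nhds hy] with z hz
      exact heq z hz
    have hP' : HasDerivAt (P s lam) (ψ' y) y :=
      (hd1 y hy).congr_of_eventuallyEq hev.symm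
    exact hP'.unique (hP1 y hy)
  -- the explicit formula
  set C : ℝ := 2 ^ (1 - 2 * s) * lam ^ s / Real.Gamma s with hCdef
  have hl : lam ^ s = lam ^ (s - 1) * lam := by
    have h := Real.rpow_add_one hlam.ne' (s - 1)
    rw [show s - 1 + 1 = s by ring] at h
    exact h
  have h44 : (4:ℝ) ^ (s - 1) * ((2:ℝ) ^ (1 - 2 * s) * 2) = 1 := by
    have h4 : (4:ℝ) ^ (s - 1) = (2:ℝ) ^ (2 * (s - 1)) := by
      rw [show (4:ℝ) = (2:ℝ) ^ (2:ℕ) by norm_num, ← Real.rpow_natCast (2:ℝ) 2,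
        ← Real.rpow_mul (by norm_num : (0:ℝ) ≤ 2)]
      norm_num
    rw [h4, ← mul_assoc, ← Real.rpow_add (by norm_num : (0:ℝ) < 2),
      show 2 * (s - 1) + (1 - 2 * s) = -1 by ring, Real.rpow_neg_one]
    norm_num
  have hinv4 : (2:ℝ) ^ (1 - 2 * s) * 2 = ((4:ℝ) ^ (s - 1))⁻¹ := by
    have h4pos : (0:ℝ) < (4:ℝ) ^ (s - 1) := Real.rpow_pos_of_pos (by norm_num) _
    field_simp
    linear_combination h44
  have hconst : (lam / 4) ^ (s - 1) * lam = 2 ^ (1 - 2 * s) * lam ^ s * 2 := by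
    rw [Real.div_rpow hlam.le (by norm_num : (0:ℝ) ≤ 4), hl, div_eq_mul_inv,
      ← hinv4]
    ring
  have hform : ∀ y : ℝ, 0 < y →
      -(y ^ α * P1 s lam y) = C * K (-s) (lam * y ^ 2 / 4) := by
    intro y hy
    have hc : 0 < lam * y ^ 2 / 4 := by positivity
    have hKi := K_inv (s - 2) (lam * y ^ 2 / 4) hc
    rw [show s - 2 + 1 = s - 1 by ring, show -(s - 2) - 2 = -s by ring] at hKi
    have hy2 : ((y:ℝ) ^ 2) ^ (s - 1) = y ^ (2 * (s - 1)) := by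
      rw [← Real.rpow_natCast y 2, ← Real.rpow_mul hy.le]
      norm_num
    have hcys : (lam * y ^ 2 / 4) ^ (s - 1)
        = (lam / 4) ^ (s - 1) * y ^ (2 * (s - 1)) := by
      rw [show lam * y ^ 2 / 4 = (lam / 4) * y ^ 2 by ring,
        Real.mul_rpow (by positivity) (by positivity), hy2]
    have hyy : y ^ α * y * y ^ (2 * (s - 1)) = 1 := by
      rw [show y ^ α * y = y ^ (α + 1) from (Real.rpow_add_one hy.ne' α).symm,
        show y ^ (α + 1) * y ^ (2 * (s - 1))
          = y ^ (α + 1 + 2 * (s - 1)) from (Real.rpow_add hy _ _).symm,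
        show α + 1 + 2 * (s - 1) = 0 by rw [hα]; ring, Real.rpow_zero]
    unfold P1
    rw [hKi, hcys]
    have expand : -(y ^ α * (-(lam * y / (2 * Real.Gamma s)) *
        ((lam / 4) ^ (s - 1) * y ^ (2 * (s - 1)) * K (-s) (lam * y ^ 2 / 4))))
        = (y ^ α * y * y ^ (2 * (s - 1))) *
          ((lam / 4) ^ (s - 1) * lam / (2 * Real.Gamma s)) *
          K (-s) (lam * y ^ 2 / 4) := by
      ring
    rw [expand, hyy, one_mul, hCdef]
    rw [show (lam / 4) ^ (s - 1) * lam / (2 * Real.Gamma s)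
        = ((lam / 4) ^ (s - 1) * lam) / (2 * Real.Gamma s) by ring, hconst]
    field_simp
  have hlimK := (tendsto_K_zero lam (-s) hlam (by linarith)).const_mul C
  rw [show -s + 1 = 1 - s by ring] at hlimK
  have hval : C * Real.Gamma (1 - s)
      = (2:ℝ) ^ (1 - 2 * s) * Real.Gamma (1 - s) / Real.Gamma s * lam ^ s := by
    rw [hCdef]; ring
  rw [hval] at hlimK
  apply hlimK.congr'
  filter_upwards [self_mem_nhdsWithin] with y hy
  rw [← hform y hy, heq' y hy]
end

section
/- (Truncation to a finite cylinder) Let λ > 0, α = 1−2s ∈ (−1,1), and let ψ_λ be the decaying solution on (0,∞) of ψ'' + (α/y)ψ' = λψ, ψ(0)=1 (given in terms of the Bessel function K_s). Then there exist constants C, b > 0 depending only on s and λ_1 such that for all λ ≥ λ_1 and Y ≥ 1: ∫_Y^∞ y^α (|ψ_λ'(y)|² + λ |ψ_λ(y)|²) dy ≤ C λ^s e^{-b√λ Y}. Consequently the energy of the Caffarelli–Silvestre extension outside the truncated cylinder Ω × (0,Y) decays exponentially in Y. -/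
open Real Filter MeasureTheory

private lemma stmt19_mono_aux {a : ℝ} (ha : 0 < a) {F F' : ℝ → ℝ}
    (hF : ∀ y : ℝ, 0 < y → HasDerivAt F (F' y) y)
    (hF' : ∀ y : ℝ, a ≤ y → 0 ≤ F' y) : MonotoneOn F (Set.Ici a) := by
  apply monotoneOn_of_deriv_nonneg (convex_Ici a)
  · intro y hy
    exact (hF y (lt_of_lt_of_le ha hy)).continuousAt.continuousWithinAt
  · rw [interior_Ici]
    intro y hy
    exact (hF y (ha.trans hy)).differentiableAt.differentiableWithinAt
  · rw [interior_Ici]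
    intro y hy
    rw [(hF y (ha.trans hy)).deriv]
    exact hF' y hy.le

private lemma stmt19_grow_aux {s a c : ℝ} (hs : 0 < s) (ha : 0 < a) (hc : 0 < c)
    {φ φ' : ℝ → ℝ}
    (hφ : ∀ y : ℝ, 0 < y → HasDerivAt φ (φ' y) y)
    (hφ' : ∀ y : ℝ, a ≤ y → 2 * c * y ^ (2*s - 1) ≤ φ' y)
    (h0 : Tendsto φ atTop (nhds 0)) : False := by
  set D : ℝ → ℝ := fun y => φ y - (c/s) * y ^ (2*s) with hD
  have hDd : ∀ y : ℝ, 0 < y → HasDerivAt D (φ' y - 2*c * y ^ (2*s-1)) y := by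
    intro y hy
    have h1 : HasDerivAt (fun z : ℝ => z ^ (2*s)) ((2*s) * y ^ (2*s - 1)) y :=
      Real.hasDerivAt_rpow_const (Or.inl hy.ne')
    have h2 := (hφ y hy).sub (h1.const_mul (c/s))
    refine h2.congr_deriv ?_
    field_simp
  have hmono : MonotoneOn D (Set.Ici a) :=
    stmt19_mono_aux ha hDd (fun y hy => by linarith [hφ' y hy])
  have hlb : ∀ y, a ≤ y → D a + (c/s) * y ^ (2*s) ≤ φ y := by
    intro y hy
    have h3 := hmono Set.self_mem_Ici (Set.mem_Ici.2 hy) hy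
    simp only [hD] at h3
    linarith
  have h2s : (0:ℝ) < 2*s := by linarith
  have htop : Tendsto (fun y : ℝ => D a + (c/s) * y ^ (2*s)) atTop atTop := by
    apply tendsto_atTop_add_const_left
    exact (tendsto_rpow_atTop h2s).const_mul_atTop (by positivity)
  have hT : Tendsto φ atTop atTop :=
    tendsto_atTop_mono' atTop (eventually_atTop.2 ⟨a, hlb⟩) htop
  exact not_tendsto_atTop_of_tendsto_nhds h0 hT

private lemma stmt19_amgm {a b r : ℝ} (hr : 0 ≤ r) :
    2 * Real.sqrt r * |a * b| ≤ b ^ 2 + r * a ^ 2 := by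
  have h1 := sq_nonneg (|b| - Real.sqrt r * |a|)
  have h2 : Real.sqrt r ^ 2 = r := Real.sq_sqrt hr
  rw [abs_mul]
  nlinarith [sq_abs a, sq_abs b, abs_nonneg a, abs_nonneg b]

set_option maxHeartbeats 1000000 in
/-- Exponential decay of the tail energy of the (fiberwise) Caffarelli–
Silvestre extension: for the decaying solution `ψ_λ` of
`ψ'' + (α/y)ψ' = λψ`, `ψ(0⁺)=1`, `α = 1-2s`, there are `C, b > 0` depending
only on `s, λ₁` with
`∫_Y^∞ y^α (ψ_λ'² + λψ_λ²) ≤ C λ^s e^{-b√λ Y}` for all `λ ≥ λ₁`, `Y ≥ 1`. -/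
theorem stmt_19 (s : ℝ) (hs : s ∈ Set.Ioo (0:ℝ) 1) (α : ℝ) (hα : α = 1 - 2 * s)
    (lam1 : ℝ) (hlam1 : 0 < lam1)
    (ψ ψ' ψ'' : ℝ → ℝ → ℝ)
    (hd1 : ∀ lam, lam1 ≤ lam → ∀ y, 0 < y → HasDerivAt (ψ lam) (ψ' lam y) y)
    (hd2 : ∀ lam, lam1 ≤ lam → ∀ y, 0 < y → HasDerivAt (ψ' lam) (ψ'' lam y) y)
    (hode : ∀ lam, lam1 ≤ lam → ∀ y, 0 < y →
      ψ'' lam y + (α / y) * ψ' lam y = lam * ψ lam y)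
    (hbc : ∀ lam, lam1 ≤ lam →
      Tendsto (ψ lam) (nhdsWithin 0 (Set.Ioi 0)) (nhds 1))
    (hdecay : ∀ lam, lam1 ≤ lam → Tendsto (ψ lam) atTop (nhds 0)) :
    ∃ C b : ℝ, 0 < C ∧ 0 < b ∧ ∀ lam, lam1 ≤ lam → ∀ Y : ℝ, 1 ≤ Y →
      (∫ y in Set.Ioi Y, y ^ α * ((ψ' lam y) ^ 2 + lam * (ψ lam y) ^ 2))
        ≤ C * lam ^ s * Real.exp (-b * Real.sqrt lam * Y) := by
  obtain ⟨hs0, hs1⟩ := hs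
  have hCpos : (0:ℝ) < 32 / lam1 ^ s := by positivity
  refine ⟨32 / lam1 ^ s, 1, hCpos, one_pos, ?_⟩
  intro lam hlam Y hY
  have hlam0 : 0 < lam := hlam1.trans_le hlam
  have hsqrt0 : 0 ≤ Real.sqrt lam := Real.sqrt_nonneg lam
  have hexpα : -α = 2*s - 1 := by rw [hα]; ring
  set f : ℝ → ℝ := fun y => y ^ α * ((ψ' lam y) ^ 2 + lam * (ψ lam y) ^ 2) with hfdef
  set w : ℝ → ℝ := fun y => y ^ α * (ψ lam y * ψ' lam y) with hwdef
  -- derivative of w is f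
  have hwd : ∀ y : ℝ, 0 < y → HasDerivAt w (f y) y := by
    intro y hy
    have h1 : HasDerivAt (fun z : ℝ => z ^ α) (α * y ^ (α - 1)) y :=
      Real.hasDerivAt_rpow_const (Or.inl hy.ne')
    have h2 : HasDerivAt (fun z => ψ lam z * ψ' lam z)
        (ψ' lam y * ψ' lam y + ψ lam y * ψ'' lam y) y :=
      (hd1 lam hlam y hy).mul (hd2 lam hlam y hy)
    have h3 := h1.mul h2
    refine h3.congr_deriv ?_
    have hode' := hode lam hlam y hy
    have hψ'' : ψ'' lam y = lam * ψ lam y - (α/y) * ψ' lam y := by linarith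
    have hpow : y ^ (α - 1) = y ^ α / y := Real.rpow_sub_one hy.ne' α
    simp only [hfdef, hψ'', hpow]
    field_simp
    ring
  have hf0 : ∀ y : ℝ, 0 < y → 0 ≤ f y := by
    intro y hy
    have h1 : (0:ℝ) ≤ y ^ α := (Real.rpow_pos_of_pos hy α).le
    simp only [hfdef]
    positivity
  -- w is "monotone" pairwise
  have hw_le : ∀ x y : ℝ, 0 < x → x ≤ y → w x ≤ w y := by
    intro x y hx hxy
    exact stmt19_mono_aux hx hwd (fun z hz => hf0 z (hx.trans_le hz))
      Set.self_mem_Ici (Set.mem_Ici.2 hxy) hxy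
  -- derivative of ψ²
  have hsqd : ∀ z : ℝ, 0 < z →
      HasDerivAt (fun t => (ψ lam t)^2) (2 * ψ lam z * ψ' lam z) z := by
    intro z hz
    have := (hd1 lam hlam z hz).pow 2
    refine this.congr_deriv ?_
    push_cast
    ring
  have hψ2lim : Tendsto (fun t => (ψ lam t)^2) atTop (nhds 0) := by
    have := (hdecay lam hlam).pow 2
    simpa using this
  -- ψ ψ' in terms of w
  have hpp : ∀ z : ℝ, 0 < z → ψ lam z * ψ' lam z = z ^ (2*s-1) * w z := by
    intro z hz
    rw [← hexpα, Real.rpow_neg hz.le, hwdef]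
    have hzα : z ^ α ≠ 0 := (Real.rpow_pos_of_pos hz α).ne'
    field_simp
  have hzpow_pos : ∀ z : ℝ, 0 < z → (0:ℝ) < z ^ (2*s-1) := by
    intro z hz; exact Real.rpow_pos_of_pos hz _
  -- w ≤ 0
  have hw_nonpos : ∀ y : ℝ, 0 < y → w y ≤ 0 := by
    intro y0 hy0
    by_contra hpos
    push_neg at hpos
    refine stmt19_grow_aux hs0 hy0 hpos (φ := fun z => (ψ lam z)^2)
      (φ' := fun z => 2 * ψ lam z * ψ' lam z) hsqd ?_ hψ2lim
    intro z hz
    have hz0 : 0 < z := hy0.trans_le hz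
    have h1 : w y0 ≤ w z := hw_le y0 z hy0 hz
    have h2 := hpp z hz0
    have h3 : z ^ (2*s-1) * w y0 ≤ z ^ (2*s-1) * w z :=
      mul_le_mul_of_nonneg_left h1 (hzpow_pos z hz0).le
    show 2 * w y0 * z ^ (2*s-1) ≤ 2 * ψ lam z * ψ' lam z
    linarith
  -- limit of w at infinity is 0
  have hwlim0 : Tendsto w atTop (nhds 0) := by
    set W : ℝ → ℝ := fun y => w (max 1 y) with hWdef
    have hmaxpos : ∀ y : ℝ, (0:ℝ) < max 1 y := fun y =>
      lt_of_lt_of_le one_pos (le_max_left _ _)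
    have hWmono : Monotone W := by
      intro x y hxy
      exact hw_le _ _ (hmaxpos x) (max_le_max le_rfl hxy)
    have hWbdd : BddAbove (Set.range W) := by
      refine ⟨0, ?_⟩
      rintro _ ⟨y, rfl⟩
      exact hw_nonpos _ (hmaxpos y)
    have hWlim := tendsto_atTop_ciSup hWmono hWbdd
    have hwW : ∀ᶠ y in atTop, W y = w y := by
      filter_upwards [eventually_ge_atTop (1:ℝ)] with y hy
      simp [hWdef, max_eq_right hy]
    have hwlim : Tendsto w atTop (nhds (⨆ y, W y)) := hWlim.congr' hwW
    have hL0 : (⨆ y, W y) ≤ 0 := ciSup_le (fun y => hw_nonpos _ (hmaxpos y))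
    rcases eq_or_lt_of_le hL0 with hLeq | hLlt
    · rwa [hLeq] at hwlim
    · exfalso
      set L := ⨆ y, W y with hLdef
      refine stmt19_grow_aux hs0 one_pos (c := -L) (by linarith)
        (φ := fun z => -(ψ lam z)^2) (φ' := fun z => -(2 * ψ lam z * ψ' lam z))
        (fun z hz => (hsqd z hz).neg) ?_ (by simpa using hψ2lim.neg)
      intro z hz
      have hz0 : (0:ℝ) < z := lt_of_lt_of_le one_pos hz
      have hwzL : w z ≤ L := by
        have h4 := le_ciSup hWbdd z
        simpa [hWdef, max_eq_right hz] using h4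
      have h2 := hpp z hz0
      have h3 : z ^ (2*s-1) * w z ≤ z ^ (2*s-1) * L :=
        mul_le_mul_of_nonneg_left hwzL (hzpow_pos z hz0).le
      show 2 * -L * z ^ (2*s-1) ≤ -(2 * ψ lam z * ψ' lam z)
      linarith
  -- ψ² ≤ 1
  have hv_anti : ∀ t y : ℝ, 0 < t → t ≤ y → (ψ lam y)^2 ≤ (ψ lam t)^2 := by
    intro t y ht hty
    have hmono : MonotoneOn (fun z => -(ψ lam z)^2) (Set.Ici t) := by
      refine stmt19_mono_aux ht (F' := fun z => -(2 * ψ lam z * ψ' lam z))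
        (fun z hz => (hsqd z hz).neg) ?_
      intro z hz
      have hz0 : 0 < z := ht.trans_le hz
      have h2 := hpp z hz0
      have h3 : z ^ (2*s-1) * w z ≤ 0 :=
        mul_nonpos_of_nonneg_of_nonpos (hzpow_pos z hz0).le (hw_nonpos z hz0)
      show (0:ℝ) ≤ -(2 * ψ lam z * ψ' lam z)
      linarith
    have := hmono Set.self_mem_Ici (Set.mem_Ici.2 hty) hty
    simpa using this
  have hψ2le1 : ∀ y : ℝ, 0 < y → (ψ lam y)^2 ≤ 1 := by
    intro y hy
    have h1 : Tendsto (fun t => (ψ lam t)^2) (nhdsWithin 0 (Set.Ioi 0)) (nhds 1) := by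
      have := (hbc lam hlam).pow 2
      simpa using this
    refine ge_of_tendsto h1 ?_
    have hmem : Set.Ioo (0:ℝ) y ∈ nhdsWithin 0 (Set.Ioi 0) :=
      Ioo_mem_nhdsGT_of_mem ⟨le_refl 0, hy⟩
    filter_upwards [hmem] with t ht
    exact hv_anti t y ht.1 ht.2.le
  -- MVT on [1/4, 1/2]
  have hcont : ContinuousOn (ψ lam) (Set.Icc (1/4 : ℝ) (1/2)) := by
    intro x hx
    exact (hd1 lam hlam x (by linarith [hx.1])).continuousAt.continuousWithinAt
  obtain ⟨ξ, hξmem, hξ⟩ := exists_hasDerivAt_eq_slope (ψ lam) (ψ' lam)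
    (by norm_num : (1/4:ℝ) < 1/2) hcont
    (fun x hx => hd1 lam hlam x (by linarith [hx.1]))
  have hξ1 : (1:ℝ)/4 < ξ := hξmem.1
  have hξ2 : ξ < 1/2 := hξmem.2
  have hξpos : 0 < ξ := by linarith
  have habs1 : |ψ lam (1/2)| ≤ 1 := by
    have := hψ2le1 (1/2) (by norm_num)
    nlinarith [sq_abs (ψ lam (1/2)), abs_nonneg (ψ lam (1/2))]
  have habs2 : |ψ lam (1/4)| ≤ 1 := by
    have := hψ2le1 (1/4) (by norm_num)
    nlinarith [sq_abs (ψ lam (1/4)), abs_nonneg (ψ lam (1/4))]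
  have hψ'ξ : |ψ' lam ξ| ≤ 8 := by
    rw [hξ, show (1:ℝ)/2 - 1/4 = 1/4 by norm_num, abs_div,
      abs_of_pos (by norm_num : (0:ℝ) < 1/4), div_le_iff₀ (by norm_num : (0:ℝ) < 1/4)]
    have := abs_sub (ψ lam (1/2)) (ψ lam (1/4))
    linarith
  have hψξ : |ψ lam ξ| ≤ 1 := by
    have := hψ2le1 ξ hξpos
    nlinarith [sq_abs (ψ lam ξ), abs_nonneg (ψ lam ξ)]
  have hξa : ξ ^ α ≤ 4 := by
    calc ξ ^ α ≤ ξ ^ (-1 : ℝ) :=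
          Real.rpow_le_rpow_of_exponent_ge hξpos (by linarith) (by rw [hα]; linarith)
      _ = ξ⁻¹ := Real.rpow_neg_one ξ
      _ ≤ 4 := by
          rw [show (4:ℝ) = (1/4)⁻¹ by norm_num]
          exact inv_anti₀ (by norm_num) hξ1.le
  have hwξ32 : -w ξ ≤ 32 := by
    have h1 : |w ξ| ≤ 32 := by
      simp only [hwdef]
      rw [abs_mul, abs_mul, abs_of_pos (Real.rpow_pos_of_pos hξpos α)]
      calc ξ ^ α * (|ψ lam ξ| * |ψ' lam ξ|) ≤ 4 * (1 * 8) := by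
            apply mul_le_mul hξa _ (by positivity) (by norm_num)
            exact mul_le_mul hψξ hψ'ξ (abs_nonneg _) (by norm_num)
        _ = 32 := by norm_num
    linarith [neg_abs_le (w ξ), abs_nonneg (w ξ)]
  -- Grönwall : y ↦ w y * exp(2√λ y) is monotone
  set b2 : ℝ := 2 * Real.sqrt lam with hb2def
  have hb2nonneg : 0 ≤ b2 := by positivity
  set g : ℝ → ℝ := fun y => w y * Real.exp (b2 * y) with hgdef
  have hgd : ∀ y : ℝ, 0 < y →
      HasDerivAt g ((f y + b2 * w y) * Real.exp (b2 * y)) y := by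
    intro y hy
    have he : HasDerivAt (fun z : ℝ => Real.exp (b2 * z)) (b2 * Real.exp (b2 * y)) y := by
      have := ((hasDerivAt_id y).const_mul b2).exp
      simpa [mul_comm] using this
    have h2 := (hwd y hy).mul he
    refine h2.congr_deriv ?_
    ring
  have hg' : ∀ y : ℝ, 0 < y → 0 ≤ (f y + b2 * w y) * Real.exp (b2 * y) := by
    intro y hy
    apply mul_nonneg _ (Real.exp_nonneg _)
    have hyα : (0:ℝ) ≤ y ^ α := (Real.rpow_pos_of_pos hy α).le
    have key : 2 * Real.sqrt lam * |ψ lam y * ψ' lam y|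
        ≤ (ψ' lam y)^2 + lam * (ψ lam y)^2 := stmt19_amgm hlam0.le
    have h4 : y ^ α * (2 * Real.sqrt lam * |ψ lam y * ψ' lam y|)
        ≤ y ^ α * ((ψ' lam y)^2 + lam * (ψ lam y)^2) :=
      mul_le_mul_of_nonneg_left key hyα
    have h5 : -(|ψ lam y * ψ' lam y|) ≤ ψ lam y * ψ' lam y := neg_abs_le _
    have h6 : (2 * Real.sqrt lam) * (y ^ α * -(|ψ lam y * ψ' lam y|))
        ≤ (2 * Real.sqrt lam) * (y ^ α * (ψ lam y * ψ' lam y)) := by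
      apply mul_le_mul_of_nonneg_left _ (by positivity)
      exact mul_le_mul_of_nonneg_left h5 hyα
    show (0:ℝ) ≤ y ^ α * ((ψ' lam y) ^ 2 + lam * (ψ lam y) ^ 2)
      + 2 * Real.sqrt lam * (y ^ α * (ψ lam y * ψ' lam y))
    linarith
  -- the tail integral
  have hint : (∫ y in Set.Ioi Y, f y) = 0 - w Y := by
    refine integral_Ioi_of_hasDerivAt_of_nonneg' (g := w) (g' := f) ?_ ?_ hwlim0
    · intro x hx
      exact hwd x (lt_of_lt_of_le one_pos (hY.trans hx))
    · intro x hx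
      exact hf0 x (lt_of_lt_of_le one_pos (hY.trans hx.le))
  have hξY : ξ ≤ Y := by linarith
  have hgm : g ξ ≤ g Y :=
    stmt19_mono_aux hξpos hgd (fun y hy => hg' y (hξpos.trans_le hy))
      Set.self_mem_Ici (Set.mem_Ici.2 hξY) hξY
  have hexpY : 0 < Real.exp (b2 * Y) := Real.exp_pos _
  have h7 : -w Y ≤ (-w ξ) * Real.exp (b2 * ξ) / Real.exp (b2 * Y) := by
    rw [le_div_iff₀ hexpY]
    have hgm' : w ξ * Real.exp (b2 * ξ) ≤ w Y * Real.exp (b2 * Y) := hgm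
    linarith
  have h8 : (-w ξ) * Real.exp (b2 * ξ) ≤ 32 * Real.exp (Real.sqrt lam) := by
    apply mul_le_mul hwξ32 _ (Real.exp_nonneg _) (by norm_num)
    apply Real.exp_le_exp.2
    rw [hb2def]
    nlinarith
  have h9 : 32 * Real.exp (Real.sqrt lam) / Real.exp (b2 * Y)
      ≤ 32 * Real.exp (-1 * Real.sqrt lam * Y) := by
    rw [div_le_iff₀ hexpY, mul_assoc, ← Real.exp_add]
    have h9a : Real.sqrt lam ≤ -1 * Real.sqrt lam * Y + b2 * Y := by
      rw [hb2def]
      nlinarith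
    exact mul_le_mul_of_nonneg_left (Real.exp_le_exp.2 h9a) (by norm_num)
  have h10 : (32:ℝ) ≤ (32 / lam1 ^ s) * lam ^ s := by
    rw [div_mul_eq_mul_div, le_div_iff₀ (Real.rpow_pos_of_pos hlam1 s)]
    have := Real.rpow_le_rpow hlam1.le hlam hs0.le
    nlinarith [Real.rpow_pos_of_pos hlam1 s]
  rw [hint]
  calc 0 - w Y ≤ (-w ξ) * Real.exp (b2 * ξ) / Real.exp (b2 * Y) := by linarith
    _ ≤ 32 * Real.exp (Real.sqrt lam) / Real.exp (b2 * Y) :=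
        (div_le_div_iff_of_pos_right hexpY).2 h8
    _ ≤ 32 * Real.exp (-1 * Real.sqrt lam * Y) := h9
    _ ≤ (32 / lam1 ^ s) * lam ^ s * Real.exp (-1 * Real.sqrt lam * Y) :=
        mul_le_mul_of_nonneg_right h10 (Real.exp_nonneg _)
end
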